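/- Let A be an Arens–Michael algebra, X a complete locally convex right A-module with jointly continuous module action, and I ⊆ A a closed left ideal. Let p be a continuous seminorm on X, let Y be a Banach space which is a right A-module with jointly continuous action, and let τ : X → Y be a continuous A-module morphism with dense range satisfying ‖τ(x)‖ = p(x) for all x ∈ X (so that (Y, τ) is the completion of X with respect to p). Write X·I for the linear span of {x·c : x ∈ X, c ∈ I} and Y·I for the linear span of {η·c : η ∈ Y, c ∈ I}. Then for every x ∈ X, inf{ p(x + y) : y ∈ X·I } = dist( τ(x), closure of Y·I in Y ). Equivalently, the induced linear map X/cl(X·I) → Y/cl(Y·I), x + cl(X·I) ↦ τ(x) + cl(Y·I), is isometric (from the quotient seminorm of p to the quotient norm) and has dense range, so that Y/cl(Y·I) is the completion of X/cl(X·I) with respect to the quotient seminorm of p. -/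

import Mathlib

open Filter Topology Bornology Set Pointwise

universe u

/-- Let `A` be an Arens–Michael algebra, `X` a complete locally convex
right `A`-module with jointly continuous action, `I ⊆ A` a closed left ideal, `P` a
continuous seminorm on `X`, and `(Y, τ)` the completion of `X` with respect to `P`
(`Y` a Banach right `A`-module, `τ` a continuous module morphism with dense range,
`‖τ x‖ = P x`).  Then for every `x ∈ X`,
`inf { P (x + y) : y ∈ span (X·I) } = dist (τ x, closure (span (Y·I)))`. -/
theorem stmt_8 {A : Type u} [NonUnitalRing A] [Module ℂ A] [UniformSpace A]
    [IsUniformAddGroup A] [ContinuousSMul ℂ A] [CompleteSpace A] [T2Space A]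
    {ι : Type u} [Nonempty ι] (q : SeminormFamily ℂ A ι) (hq : WithSeminorms q)
    (hqdir : ∀ i j : ι, ∃ k, ∀ a : A, q i a ≤ q k a ∧ q j a ≤ q k a)
    (hqsub : ∀ (i : ι) (a b : A), q i (a * b) ≤ q i a * q i b)
    -- the complete locally convex right `A`-module `X`
    {X : Type u} [AddCommGroup X] [Module ℂ X] [UniformSpace X] [IsUniformAddGroup X]
    [ContinuousSMul ℂ X] [CompleteSpace X] [T2Space X]
    [Module ℝ X] [IsScalarTower ℝ ℂ X] [LocallyConvexSpace ℝ X]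
    (actX : X → A → X)
    (hX_add_left : ∀ (x y : X) (a : A), actX (x + y) a = actX x a + actX y a)
    (hX_add_right : ∀ (x : X) (a b : A), actX x (a + b) = actX x a + actX x b)
    (hX_smul_left : ∀ (c : ℂ) (x : X) (a : A), actX (c • x) a = c • actX x a)
    (hX_smul_right : ∀ (c : ℂ) (x : X) (a : A), actX x (c • a) = c • actX x a)
    (hX_mul : ∀ (x : X) (a b : A), actX x (a * b) = actX (actX x a) b)
    (hX_cont : Continuous fun z : X × A => actX z.1 z.2)
    -- the closed left ideal `I`
    (I : Submodule ℂ A) (hI_closed : IsClosed (I : Set A))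
    (hI_left : ∀ a : A, ∀ c ∈ I, a * c ∈ I)
    -- the continuous seminorm `P` on `X`
    (P : Seminorm ℂ X) (hP_cont : Continuous fun x : X => P x)
    -- the Banach right `A`-module `Y`
    {Y : Type u} [NormedAddCommGroup Y] [NormedSpace ℂ Y] [CompleteSpace Y]
    (actY : Y → A → Y)
    (hY_add_left : ∀ (x y : Y) (a : A), actY (x + y) a = actY x a + actY y a)
    (hY_add_right : ∀ (x : Y) (a b : A), actY x (a + b) = actY x a + actY x b)
    (hY_smul_left : ∀ (c : ℂ) (x : Y) (a : A), actY (c • x) a = c • actY x a)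
    (hY_smul_right : ∀ (c : ℂ) (x : Y) (a : A), actY x (c • a) = c • actY x a)
    (hY_mul : ∀ (x : Y) (a b : A), actY x (a * b) = actY (actY x a) b)
    (hY_cont : Continuous fun z : Y × A => actY z.1 z.2)
    -- the canonical morphism `τ : X → Y`
    (τ : X →L[ℂ] Y) (hτ_mod : ∀ (x : X) (a : A), τ (actX x a) = actY (τ x) a)
    (hτ_dense : DenseRange τ) (hτ_norm : ∀ x : X, ‖τ x‖ = P x)
    (x : X) :
    (⨅ y : (Submodule.span ℂ {z : X | ∃ (w : X) (c : A), c ∈ I ∧ z = actX w c}),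
        P (x + (y : X))) =
      Metric.infDist (τ x)
        (closure ((Submodule.span ℂ
          {z : Y | ∃ (w : Y) (c : A), c ∈ I ∧ z = actY w c} : Submodule ℂ Y) : Set Y)) := by
  classical
  set S : Submodule ℂ X :=
    Submodule.span ℂ {z : X | ∃ (w : X) (c : A), c ∈ I ∧ z = actX w c} with hS
  set T : Submodule ℂ Y :=
    Submodule.span ℂ {z : Y | ∃ (w : Y) (c : A), c ∈ I ∧ z = actY w c} with hT
  have hmap : (⇑τ : X → Y) '' (S : Set X) ⊆ (T : Set Y) := by
    have hle : Submodule.map (τ : X →ₗ[ℂ] Y) S ≤ T := by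
      rw [hS, Submodule.map_span]
      apply Submodule.span_mono
      rintro _ ⟨z, ⟨w, c, hc, rfl⟩, rfl⟩
      exact ⟨τ w, c, hc, hτ_mod w c⟩
    rintro _ ⟨y, hy, rfl⟩
    exact hle ⟨y, hy, rfl⟩
  have hTsub : (T : Set Y) ⊆ closure ((⇑τ : X → Y) '' (S : Set X)) := by
    have hC : (((Submodule.map (τ : X →ₗ[ℂ] Y) S).topologicalClosure : Submodule ℂ Y)
        : Set Y) = closure ((⇑τ : X → Y) '' (S : Set X)) := by
      rw [Submodule.topologicalClosure_coe, Submodule.map_coe]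
      simp only [ContinuousLinearMap.coe_coe]
    rw [hT]
    rw [show closure ((⇑τ : X → Y) '' (S : Set X))
        = (((Submodule.map (τ : X →ₗ[ℂ] Y) S).topologicalClosure : Submodule ℂ Y)
          : Set Y) from hC.symm]
    apply Submodule.span_le.mpr
    rintro _ ⟨w, c, hc, rfl⟩
    show actY w c ∈ (((Submodule.map (τ : X →ₗ[ℂ] Y) S).topologicalClosure) : Set Y)
    rw [hC]
    have hgc : Continuous fun y : Y => actY y c :=
      hY_cont.comp (continuous_id.prodMk continuous_const)
    refine map_mem_closure (f := fun y : Y => actY y c) hgc (hτ_dense w) ?_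
    rintro _ ⟨v, rfl⟩
    exact ⟨actX v c, Submodule.subset_span ⟨v, c, hc, rfl⟩, hτ_mod v c⟩
  have hclos : closure (T : Set Y) = closure ((⇑τ : X → Y) '' (S : Set X)) :=
    le_antisymm (closure_minimal hTsub isClosed_closure) (closure_mono hmap)
  rw [hclos, Metric.infDist_closure]
  have hne : ((⇑τ : X → Y) '' (S : Set X)).Nonempty := ⟨τ 0, 0, S.zero_mem, rfl⟩
  have hbdd : BddBelow (Set.range fun y : S => P (x + (y : X))) := by
    refine ⟨0, ?_⟩
    rintro _ ⟨y, rfl⟩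
    exact apply_nonneg P _
  rw [Metric.infDist_eq_iInf]
  refine le_antisymm (le_ciInf fun z => ?_) (le_ciInf fun y => ?_)
  · obtain ⟨v, hv, hz⟩ := z.2
    have hd : dist (τ x) (z : Y) = P (x + -v) := by
      rw [← hz, dist_eq_norm, ← map_sub, hτ_norm, sub_eq_add_neg]
    rw [hd]
    exact ciInf_le hbdd (⟨-v, S.neg_mem hv⟩ : S)
  · have hmem : τ (-(y : X)) ∈ (⇑τ : X → Y) '' (S : Set X) :=
      ⟨-(y : X), S.neg_mem y.2, rfl⟩
    have hd : dist (τ x) (τ (-(y : X))) = P (x + (y : X)) := by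
      rw [dist_eq_norm, map_neg, sub_neg_eq_add, ← map_add, hτ_norm]
    calc (⨅ z : ((⇑τ : X → Y) '' (S : Set X)), dist (τ x) (z : Y))
        ≤ dist (τ x) (τ (-(y : X))) :=
          ciInf_le ⟨0, by rintro _ ⟨z, rfl⟩; exact dist_nonneg⟩
            (⟨τ (-(y : X)), hmem⟩ : ((⇑τ : X → Y) '' (S : Set X)))
      _ = P (x + (y : X)) := hd
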